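/- For natural numbers d ≥ 7 and t with 0 ≤ t and 2t + 2 ≤ d, the matching number of B_{d,d+t} equals d + t. -/

import Mathlib

/-- Vertex set of the graph `B_{d,d+t}`: two "sides" `A` and `B`, each split as
`F` (of size `d-1`) and `H` (of size `t+1`), together with one extra vertex `v`. -/
abbrev BVert (d t : ℕ) : Type :=
  (Fin (d - 1) ⊕ Fin (t + 1)) ⊕ ((Fin (d - 1) ⊕ Fin (t + 1)) ⊕ Unit)

/-- Base relation for `B_{d,d+t}`: `F_A`-`F_B` is a complete bipartite graph minus
`t` disjoint perfect matchings (the pairs at cyclic shifts `0, …, t-1`); `F_A`-`H_B`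
and `F_B`-`H_A` are complete bipartite; the extra vertex `v` is joined to all of
`H_A ∪ H_B`. -/
def BRel (d t : ℕ) : BVert d t → BVert d t → Prop
  | Sum.inl (Sum.inl i), Sum.inr (Sum.inl (Sum.inl j)) =>
      t ≤ (j.val + (d - 1) - i.val) % (d - 1)
  | Sum.inl (Sum.inl _), Sum.inr (Sum.inl (Sum.inr _)) => True
  | Sum.inl (Sum.inr _), Sum.inr (Sum.inl (Sum.inl _)) => True
  | Sum.inr (Sum.inr _), Sum.inl (Sum.inr _) => True
  | Sum.inr (Sum.inr _), Sum.inr (Sum.inl (Sum.inr _)) => True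
  | _, _ => False

/-- The graph `B_{d,d+t}`. -/
def BGraph (d t : ℕ) : SimpleGraph (BVert d t) := SimpleGraph.fromRel (BRel d t)

noncomputable instance (d t : ℕ) : DecidableRel (BGraph d t).Adj :=
  Classical.decRel _

/-- The matching number of a simple graph: the largest size of a matching. -/
noncomputable def matchingNumber {V : Type*} (G : SimpleGraph V) : ℕ :=
  sSup {n | ∃ M : G.Subgraph, M.IsMatching ∧ M.edgeSet.ncard = n}

open Finset in
lemma matching_verts_ncard {V : Type*} [Fintype V] {G : SimpleGraph V} {M : G.Subgraph}
    (h : M.IsMatching) : M.verts.ncard = 2 * M.edgeSet.ncard := by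
  classical
  rw [Set.ncard_eq_toFinset_card', Set.ncard_eq_toFinset_card']
  set f : V → Sym2 V := fun v => if hv : v ∈ M.verts then s(v, (h hv).choose) else s(v, v) with hf
  have H : ∀ v ∈ M.verts.toFinset, f v ∈ M.edgeSet.toFinset := by
    intro v hv
    rw [Set.mem_toFinset] at hv ⊢
    rw [hf]
    simp only [dif_pos hv]
    exact (h hv).choose_spec.1
  rw [Finset.card_eq_sum_card_fiberwise H]
  have key : ∀ a b, M.Adj a b →
      (M.verts.toFinset.filter (fun v => f v = s(a, b))).card = 2 := by
    intro a b hab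
    have hab' : a ≠ b := (M.adj_sub hab).ne
    have ha : a ∈ M.verts := M.edge_vert hab
    have hb : b ∈ M.verts := M.edge_vert hab.symm
    have hfilter : M.verts.toFinset.filter (fun v => f v = s(a, b)) = {a, b} := by
      ext v
      simp only [Finset.mem_filter, Set.mem_toFinset, Finset.mem_insert, Finset.mem_singleton]
      constructor
      · rintro ⟨hv, hfv⟩
        have hvmem : v ∈ (f v) := by rw [hf]; simp only [dif_pos hv]; exact Sym2.mem_mk_left _ _
        rw [hfv, Sym2.mem_iff] at hvmem
        exact hvmem
      · rintro (rfl | rfl)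
        · refine ⟨ha, ?_⟩
          rw [hf]; simp only [dif_pos ha]
          rw [← (h ha).choose_spec.2 b hab]
        · refine ⟨hb, ?_⟩
          rw [hf]; simp only [dif_pos hb]
          rw [← (h hb).choose_spec.2 a hab.symm, Sym2.eq_swap]
    rw [hfilter, Finset.card_insert_of_notMem (by simp [hab']), Finset.card_singleton]
  have hfib : ∀ e ∈ M.edgeSet.toFinset, (M.verts.toFinset.filter (fun v => f v = e)).card = 2 := by
    intro e
    refine Sym2.ind (fun a b he => ?_) e
    rw [Set.mem_toFinset, SimpleGraph.Subgraph.mem_edgeSet] at he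
    exact key a b he
  rw [Finset.sum_congr rfl hfib, Finset.sum_const, smul_eq_mul, mul_comm]

section Construction
variable (d t : ℕ) (hd : 7 ≤ d) (ht : 2 * t + 2 ≤ d)

def bf : BVert d t → BVert d t
  | Sum.inl (Sum.inl i) =>
      if _ : i.val ≤ t then Sum.inr (Sum.inl (Sum.inr ⟨i.val, by omega⟩))
      else Sum.inr (Sum.inl (Sum.inl ⟨i.val - 1, by have := i.isLt; omega⟩))
  | Sum.inl (Sum.inr k) =>
      if _ : k.val = 0 then Sum.inr (Sum.inr ())
      else Sum.inr (Sum.inl (Sum.inl ⟨k.val - 1, by have := k.isLt; omega⟩))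
  | Sum.inr (Sum.inl (Sum.inl j)) =>
      if _ : j.val < t then Sum.inl (Sum.inr ⟨j.val + 1, by omega⟩)
      else if _ : j.val = d - 2 then Sum.inr (Sum.inl (Sum.inl j))
      else Sum.inl (Sum.inl ⟨j.val + 1, by have := j.isLt; omega⟩)
  | Sum.inr (Sum.inl (Sum.inr k)) =>
      Sum.inl (Sum.inl ⟨k.val, by have := k.isLt; omega⟩)
  | Sum.inr (Sum.inr _) => Sum.inl (Sum.inr ⟨0, by omega⟩)

def bS : Set (BVert d t) := {x | x ≠ Sum.inr (Sum.inl (Sum.inl ⟨d - 2, by omega⟩))}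

variable {d t}

lemma bf_FA_le (i : Fin (d - 1)) (h : i.val ≤ t) :
    bf d t hd ht (Sum.inl (Sum.inl i)) = Sum.inr (Sum.inl (Sum.inr ⟨i.val, by omega⟩)) := by
  simp only [bf]; rw [dif_pos h]

lemma bf_FA_gt (i : Fin (d - 1)) (h : ¬ i.val ≤ t) :
    bf d t hd ht (Sum.inl (Sum.inl i)) =
      Sum.inr (Sum.inl (Sum.inl ⟨i.val - 1, by have := i.isLt; omega⟩)) := by
  simp only [bf]; rw [dif_neg h]

lemma bf_HA_zero (k : Fin (t + 1)) (h : k.val = 0) :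
    bf d t hd ht (Sum.inl (Sum.inr k)) = Sum.inr (Sum.inr ()) := by
  simp only [bf]; rw [dif_pos h]

lemma bf_HA_pos (k : Fin (t + 1)) (h : ¬ k.val = 0) :
    bf d t hd ht (Sum.inl (Sum.inr k)) =
      Sum.inr (Sum.inl (Sum.inl ⟨k.val - 1, by have := k.isLt; omega⟩)) := by
  simp only [bf]; rw [dif_neg h]

lemma bf_FB_lo (j : Fin (d - 1)) (h : j.val < t) :
    bf d t hd ht (Sum.inr (Sum.inl (Sum.inl j))) = Sum.inl (Sum.inr ⟨j.val + 1, by omega⟩) := by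
  simp only [bf]; rw [dif_pos h]

lemma bf_FB_mid (j : Fin (d - 1)) (h : ¬ j.val < t) (h2 : ¬ j.val = d - 2) :
    bf d t hd ht (Sum.inr (Sum.inl (Sum.inl j))) =
      Sum.inl (Sum.inl ⟨j.val + 1, by have := j.isLt; omega⟩) := by
  simp only [bf]; rw [dif_neg h, dif_neg h2]

lemma bf_HB (k : Fin (t + 1)) :
    bf d t hd ht (Sum.inr (Sum.inl (Sum.inr k))) =
      Sum.inl (Sum.inl ⟨k.val, by have := k.isLt; omega⟩) := rfl

lemma bf_v (u : Unit) :
    bf d t hd ht (Sum.inr (Sum.inr u)) = Sum.inl (Sum.inr ⟨0, by omega⟩) := rfl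

lemma mem_bS_iff (x : BVert d t) :
    x ∈ bS d t hd ↔ x ≠ Sum.inr (Sum.inl (Sum.inl ⟨d - 2, by omega⟩)) := Iff.rfl

lemma bf_mem : ∀ x ∈ bS d t hd, bf d t hd ht x ∈ bS d t hd := by
  rintro ((i | k) | ((j | k) | u)) hx <;> rw [mem_bS_iff] at hx ⊢
  · by_cases h : i.val ≤ t
    · rw [bf_FA_le hd ht i h]; simp
    · rw [bf_FA_gt hd ht i h]
      simp only [ne_eq, Sum.inr.injEq, Sum.inl.injEq, Fin.mk.injEq]
      have := i.isLt; omega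
  · by_cases h : k.val = 0
    · rw [bf_HA_zero hd ht k h]; simp
    · rw [bf_HA_pos hd ht k h]
      simp only [ne_eq, Sum.inr.injEq, Sum.inl.injEq, Fin.mk.injEq]
      have := k.isLt; omega
  · by_cases h : j.val < t
    · rw [bf_FB_lo hd ht j h]; simp
    · have h2 : ¬ j.val = d - 2 := fun h2 =>
        hx (congrArg (fun z => Sum.inr (Sum.inl (Sum.inl z))) (Fin.ext h2))
      rw [bf_FB_mid hd ht j h h2]; simp
  · rw [bf_HB hd ht k]; simp
  · rw [bf_v hd ht u]; simp

lemma bf_invol : ∀ x ∈ bS d t hd, bf d t hd ht (bf d t hd ht x) = x := by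
  rintro ((i | k) | ((j | k) | u)) hx <;> rw [mem_bS_iff] at hx
  · by_cases h : i.val ≤ t
    · rw [bf_FA_le hd ht i h, bf_HB hd ht]
    · rw [bf_FA_gt hd ht i h,
        bf_FB_mid hd ht _ (by simp only [Fin.val_mk]; omega)
          (by simp only [Fin.val_mk]; have := i.isLt; omega)]
      simp only [Sum.inl.injEq, Fin.ext_iff, Fin.val_mk]
      omega
  · by_cases h : k.val = 0
    · rw [bf_HA_zero hd ht k h, bf_v hd ht]
      simp only [Sum.inl.injEq, Sum.inr.injEq, Fin.ext_iff, Fin.val_mk]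
      omega
    · rw [bf_HA_pos hd ht k h,
        bf_FB_lo hd ht _ (by simp only [Fin.val_mk]; have := k.isLt; omega)]
      simp only [Sum.inl.injEq, Sum.inr.injEq, Fin.ext_iff, Fin.val_mk]
      omega
  · have hj2 : ¬ j.val = d - 2 := fun h2 =>
      hx (congrArg (fun z => Sum.inr (Sum.inl (Sum.inl z))) (Fin.ext h2))
    by_cases h : j.val < t
    · rw [bf_FB_lo hd ht j h, bf_HA_pos hd ht _ (by simp only [Fin.val_mk]; omega)]
      simp only [Sum.inr.injEq, Sum.inl.injEq, Fin.ext_iff, Fin.val_mk]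
      omega
    · rw [bf_FB_mid hd ht j h hj2, bf_FA_gt hd ht _ (by simp only [Fin.val_mk]; omega)]
      simp only [Sum.inr.injEq, Sum.inl.injEq, Fin.ext_iff, Fin.val_mk]
      omega
  · rw [bf_HB hd ht k, bf_FA_le hd ht _ (by simp only [Fin.val_mk]; have := k.isLt; omega)]
  · rw [bf_v hd ht u, bf_HA_zero hd ht _ rfl]

lemma bf_adj : ∀ x ∈ bS d t hd, (BGraph d t).Adj x (bf d t hd ht x) := by
  have hmod : (d - 2) % (d - 1) = d - 2 := Nat.mod_eq_of_lt (by omega)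
  rintro ((i | k) | ((j | k) | u)) hx <;> rw [mem_bS_iff] at hx
  · by_cases h : i.val ≤ t
    · rw [bf_FA_le hd ht i h]
      exact (SimpleGraph.fromRel_adj _ _ _).2 ⟨by simp, Or.inl trivial⟩
    · rw [bf_FA_gt hd ht i h]
      refine (SimpleGraph.fromRel_adj _ _ _).2 ⟨by simp, Or.inl ?_⟩
      show t ≤ (i.val - 1 + (d - 1) - i.val) % (d - 1)
      have he : (i.val - 1 + (d - 1) - i.val) = d - 2 := by omega
      rw [he, hmod]; omega
  · by_cases h : k.val = 0
    · rw [bf_HA_zero hd ht k h]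
      exact (SimpleGraph.fromRel_adj _ _ _).2 ⟨by simp, Or.inr trivial⟩
    · rw [bf_HA_pos hd ht k h]
      exact (SimpleGraph.fromRel_adj _ _ _).2 ⟨by simp, Or.inl trivial⟩
  · have hj2 : ¬ j.val = d - 2 := fun h2 =>
      hx (congrArg (fun z => Sum.inr (Sum.inl (Sum.inl z))) (Fin.ext h2))
    by_cases h : j.val < t
    · rw [bf_FB_lo hd ht j h]
      exact (SimpleGraph.fromRel_adj _ _ _).2 ⟨by simp, Or.inr trivial⟩
    · rw [bf_FB_mid hd ht j h hj2]
      refine (SimpleGraph.fromRel_adj _ _ _).2 ⟨by simp, Or.inr ?_⟩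
      show t ≤ (j.val + (d - 1) - (j.val + 1)) % (d - 1)
      have he : (j.val + (d - 1) - (j.val + 1)) = d - 2 := by omega
      rw [he, hmod]; omega
  · rw [bf_HB hd ht k]
    exact (SimpleGraph.fromRel_adj _ _ _).2 ⟨by simp, Or.inr trivial⟩
  · rw [bf_v hd ht u]
    exact (SimpleGraph.fromRel_adj _ _ _).2 ⟨by simp, Or.inl trivial⟩

def bM : (BGraph d t).Subgraph where
  verts := bS d t hd
  Adj := fun x y => (x ∈ bS d t hd ∧ y = bf d t hd ht x) ∨ (y ∈ bS d t hd ∧ x = bf d t hd ht y)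
  adj_sub := by
    rintro x y (⟨hx, rfl⟩ | ⟨hy, rfl⟩)
    · exact bf_adj hd ht x hx
    · exact (bf_adj hd ht y hy).symm
  edge_vert := by
    rintro x y (⟨hx, rfl⟩ | ⟨hy, rfl⟩)
    · exact hx
    · exact bf_mem hd ht y hy
  symm := by
    constructor
    rintro x y (⟨hx, rfl⟩ | ⟨hy, rfl⟩)
    · exact Or.inr ⟨hx, rfl⟩
    · exact Or.inl ⟨hy, rfl⟩

lemma bM_isMatching : (bM hd ht).IsMatching := by
  intro v hv
  refine ⟨bf d t hd ht v, Or.inl ⟨hv, rfl⟩, ?_⟩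
  rintro w (⟨_, rfl⟩ | ⟨hw, hvw⟩)
  · rfl
  · rw [hvw]
    exact (bf_invol hd ht w hw).symm

end Construction

lemma bvert_card (d t : ℕ) (hd : 7 ≤ d) : Nat.card (BVert d t) = 2 * (d + t) + 1 := by
  rw [Nat.card_eq_fintype_card]
  simp only [Fintype.card_sum, Fintype.card_fin, Fintype.card_unit]
  omega

theorem stmt11 (d t : ℕ) (hd : 7 ≤ d) (ht : 2 * t + 2 ≤ d) :
    matchingNumber (BGraph d t) = d + t := by
  classical
  have hvert := bvert_card d t hd
  have hverts : (bM hd ht).verts.ncard = 2 * (d + t) := by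
    have he : (bM hd ht).verts =
        Set.univ \ {(Sum.inr (Sum.inl (Sum.inl ⟨d - 2, by omega⟩)) : BVert d t)} := by
      ext x
      simp only [Set.mem_diff, Set.mem_univ, true_and, Set.mem_singleton_iff]
      exact mem_bS_iff hd x
    rw [he, Set.ncard_diff_singleton_of_mem (Set.mem_univ _), Set.ncard_univ, hvert]
    omega
  have hedge : (bM hd ht).edgeSet.ncard = d + t := by
    have h2 := matching_verts_ncard (bM_isMatching hd ht)
    rw [hverts] at h2
    omega
  have hub : ∀ n ∈ {n | ∃ M : (BGraph d t).Subgraph, M.IsMatching ∧ M.edgeSet.ncard = n},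
      n ≤ d + t := by
    rintro n ⟨M', hM', rfl⟩
    have h2 := matching_verts_ncard hM'
    have h3 : M'.verts.ncard ≤ Nat.card (BVert d t) := by
      rw [← Set.ncard_univ]
      exact Set.ncard_le_ncard (Set.subset_univ _) Set.finite_univ
    omega
  have hmem : d + t ∈ {n | ∃ M : (BGraph d t).Subgraph, M.IsMatching ∧ M.edgeSet.ncard = n} :=
    ⟨bM hd ht, bM_isMatching hd ht, hedge⟩
  exact le_antisymm (csSup_le ⟨d + t, hmem⟩ hub) (le_csSup ⟨d + t, hub⟩ hmem)
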